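/- There exists an absolute constant C > 0 with the following property. Let Δ > 0, let m, L be positive integers, and let w ∈ ℂ^m satisfy w_j ≠ 0 and Re(w_j) ≤ 0 for all j. Let x be a square-integrable random vector in ℝ^L, and let c ∈ ℂ^m be a random vector independent of x whose m real parts and m imaginary parts are 2m mutually independent centered Gaussian random variables of variance 1/2. Define y_L = ∑_{k=0}^{L−1} Re( ∑_{j=1}^m ((e^{Δ w_j} − 1)/w_j) · c_j · e^{Δ w_j (L−1−k)} ) · x_k. Then for every δ ∈ (0, 1), with probability at least 1 − δ over the draw of c, the conditional second moment satisfies E_x[y_L² | c] ≤ C · Δ² · m · L · λ_max(E[x xᵀ]) · (m + log(2/δ)). -/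

import Mathlib

open MeasureTheory ProbabilityTheory Matrix

open Real
open scoped ENNReal NNReal

lemma abs_exp_sub_one_le {z : ℂ} (hz : z.re ≤ 0) :
    ‖Complex.exp z - 1‖ ≤ ‖z‖ := by
  have hderiv : ∀ t ∈ Set.uIcc (0:ℝ) 1,
      HasDerivAt (fun t : ℝ => Complex.exp (t • z)) (Complex.exp (t • z) * z) t := by
    intro t _
    exact ((hasDerivAt_id t).smul_const z).cexp.congr_deriv (by simp)
  have hint : IntervalIntegrable (fun t : ℝ => Complex.exp (t • z) * z) volume 0 1 :=
    (Continuous.mul (by fun_prop) continuous_const).intervalIntegrable _ _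
  have heq : ∫ t in (0:ℝ)..1, Complex.exp (t • z) * z
      = Complex.exp z - 1 := by
    rw [intervalIntegral.integral_eq_sub_of_hasDerivAt hderiv hint]
    simp
  rw [← heq]
  have := intervalIntegral.norm_integral_le_of_norm_le_const
    (a := (0:ℝ)) (b := 1) (C := ‖z‖)
    (f := fun t : ℝ => Complex.exp (t • z) * z) ?_
  · simpa using this
  · intro t ht
    rw [Set.uIoc_of_le zero_le_one] at ht
    rw [norm_mul, Complex.norm_exp]
    have : (t • z).re ≤ 0 := by
      simp only [Complex.real_smul, Complex.re_ofReal_mul] -- t * z.re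
      exact mul_nonpos_of_nonneg_of_nonpos ht.1.le hz
    nlinarith [Real.exp_le_one_iff.2 this, norm_nonneg z, Real.exp_pos (t • z).re]

lemma quad_form_le {n : ℕ} (M : Matrix (Fin n) (Fin n) ℝ) (hM : M.IsHermitian)
    (a : Fin n → ℝ) :
    a ⬝ᵥ M *ᵥ a ≤ (⨆ i, hM.eigenvalues i) * ∑ i, a i ^ 2 := by
  classical
  set U : Matrix (Fin n) (Fin n) ℝ := (hM.eigenvectorUnitary : Matrix (Fin n) (Fin n) ℝ) with hU
  have hU1 : U * star U = 1 := (Unitary.mem_iff.mp hM.eigenvectorUnitary.2).2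
  set b : Fin n → ℝ := (star U) *ᵥ a with hb
  have hspec0 : M = U * Matrix.diagonal hM.eigenvalues * star U := by
    simpa using hM.spectral_theorem
  have hspec : M *ᵥ a = (U * Matrix.diagonal hM.eigenvalues * star U) *ᵥ a :=
    congrArg (fun N => N *ᵥ a) hspec0
  have hdot : ∀ v : Fin n → ℝ, a ⬝ᵥ (U *ᵥ v) = b ⬝ᵥ v := by
    intro v
    rw [Matrix.dotProduct_mulVec, hb]
    congr 1
    rw [Matrix.star_eq_conjTranspose, Matrix.conjTranspose_eq_transpose_of_trivial,
      Matrix.mulVec_transpose]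
  have key : a ⬝ᵥ M *ᵥ a = ∑ i, hM.eigenvalues i * b i ^ 2 := by
    rw [hspec, ← Matrix.mulVec_mulVec, ← Matrix.mulVec_mulVec, hdot, ← hb]
    simp only [dotProduct, Matrix.mulVec_diagonal]
    exact Finset.sum_congr rfl fun i _ => by ring
  have hnorm : ∑ i, b i ^ 2 = ∑ i, a i ^ 2 := by
    have : b ⬝ᵥ b = a ⬝ᵥ a := by
      rw [hb, ← hdot, Matrix.mulVec_mulVec, hU1, Matrix.one_mulVec]
    simpa [dotProduct, pow_two] using this
  have hbdd : BddAbove (Set.range hM.eigenvalues) := (Set.finite_range _).bddAbove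
  calc a ⬝ᵥ M *ᵥ a = ∑ i, hM.eigenvalues i * b i ^ 2 := key
    _ ≤ ∑ i, (⨆ j, hM.eigenvalues j) * b i ^ 2 := by
        apply Finset.sum_le_sum
        intro i _
        exact mul_le_mul_of_nonneg_right (le_ciSup hbdd i) (sq_nonneg _)
    _ = (⨆ i, hM.eigenvalues i) * ∑ i, a i ^ 2 := by
        rw [← Finset.mul_sum, hnorm]

lemma pdf_mul_exp (x : ℝ) :
    gaussianPDFReal 0 (1/2 : NNReal) x * Real.exp ((1/2) * x ^ 2)
      = (Real.sqrt π)⁻¹ * Real.exp (-(1/2) * x ^ 2) := by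
  rw [gaussianPDFReal_def]
  have h2 : ((1/2 : NNReal) : ℝ) = 1/2 := by norm_num
  rw [h2, mul_assoc, ← Real.exp_add]
  congr 2
  · rw [show (2:ℝ) * π * (1/2) = π by ring]
  · ring

lemma gaussian_withDensity : gaussianReal 0 (1/2 : NNReal)
    = volume.withDensity (fun x => ((gaussianPDFReal 0 (1/2 : NNReal) x).toNNReal : ℝ≥0∞)) := by
  rw [gaussianReal_of_var_ne_zero 0 (by norm_num)]
  rfl

lemma gaussian_sq_integrable :
    Integrable (fun x : ℝ => Real.exp ((1/2) * x ^ 2)) (gaussianReal 0 (1/2 : NNReal)) := by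
  rw [gaussian_withDensity]
  rw [integrable_withDensity_iff_integrable_smul
    (measurable_gaussianPDFReal _ _).real_toNNReal]
  have : (fun x : ℝ => (Real.toNNReal (gaussianPDFReal 0 (1/2 : NNReal) x)) • Real.exp ((1/2) * x ^ 2))
      = fun x => (Real.sqrt π)⁻¹ * Real.exp (-(1/2) * x ^ 2) := by
    funext x
    rw [NNReal.smul_def, smul_eq_mul, Real.coe_toNNReal _ (gaussianPDFReal_nonneg _ _ _),
      pdf_mul_exp]
  rw [this]
  exact (integrable_exp_neg_mul_sq (by norm_num : (0:ℝ) < 1/2)).const_mul _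

lemma gaussian_sq_integral :
    ∫ x, Real.exp ((1/2) * x ^ 2) ∂(gaussianReal 0 (1/2 : NNReal)) = Real.sqrt 2 := by
  rw [gaussian_withDensity]
  rw [integral_withDensity_eq_integral_smul (measurable_gaussianPDFReal _ _).real_toNNReal]
  have : (fun x : ℝ => (Real.toNNReal (gaussianPDFReal 0 (1/2 : NNReal) x)) • Real.exp ((1/2) * x ^ 2))
      = fun x => (Real.sqrt π)⁻¹ * Real.exp (-(1/2) * x ^ 2) := by
    funext x
    rw [NNReal.smul_def, smul_eq_mul, Real.coe_toNNReal _ (gaussianPDFReal_nonneg _ _ _),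
      pdf_mul_exp]
  rw [this, integral_const_mul]
  have hg : ∫ x : ℝ, Real.exp (-(1/2) * x ^ 2) = Real.sqrt (π / (1/2)) :=
    integral_gaussian (1/2)
  rw [hg, show π / (1/2 : ℝ) = 2 * π by ring, Real.sqrt_mul (by norm_num) π]
  rw [mul_comm √2 (√π), ← mul_assoc, inv_mul_cancel₀ (Real.sqrt_ne_zero'.2 pi_pos), one_mul]

section Helpers
variable {Ω : Type*} [MeasurableSpace Ω] {μ : Measure Ω}

lemma l2_mul_integrable {f g : Ω → ℝ} (hf : MemLp f 2 μ) (hg : MemLp g 2 μ) :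
    Integrable (fun ω => f ω * g ω) μ := by
  refine Integrable.mono' (((hf.integrable_sq.add hg.integrable_sq)).const_mul (1/2 : ℝ))
    (hf.aestronglyMeasurable.mul hg.aestronglyMeasurable) ?_
  filter_upwards with ω
  simp only [Pi.add_apply]
  rw [Real.norm_eq_abs]
  nlinarith [sq_nonneg (f ω - g ω), sq_nonneg (f ω + g ω), abs_mul (f ω) (g ω),
    sq_abs (f ω), sq_abs (g ω), abs_nonneg (f ω * g ω), neg_abs_le (f ω * g ω),
    le_abs_self (f ω * g ω)]

end Helpers


/-- The ZOH-discretized diagonal SSM output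
`y_L = ∑_{k=0}^{L-1} Re(∑_{j=1}^m ((e^{Δ w_j} - 1)/w_j) c_j e^{Δ w_j (L-1-k)}) x_k`. -/
noncomputable def ssmOutput {m L : ℕ} (Δ : ℝ) (w : Fin m → ℂ) (c : Fin m → ℂ)
    (x : Fin L → ℝ) : ℝ :=
  ∑ k : Fin L,
    (∑ j : Fin m, ((Complex.exp ((Δ : ℂ) * w j) - 1) / w j) * c j *
      Complex.exp ((Δ : ℂ) * w j * ((L - 1 - (k : ℕ) : ℕ) : ℂ))).re * x k

/-- There is an absolute constant `C > 0` such that, for the ZOH-discretized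
SSM with timescale `Δ > 0`, state vector `w` with nonzero entries and nonpositive real parts,
square-integrable random input `x ∈ ℝ^L`, and an independent random read-out `c` whose `2m`
real and imaginary parts are mutually independent centered Gaussians of variance `1/2`: for
every `δ ∈ (0,1)`, with probability at least `1 - δ` over `c`, the conditional second moment
`E_x[y_L² | c] = ∫ (y_L(c, x ω'))² dμ(ω')` is at most
`C Δ² m L λ_max(E[x xᵀ]) (m + log(2/δ))`. -/
theorem stmt_5 :
    ∃ C : ℝ, 0 < C ∧
      ∀ (Ω : Type) [MeasurableSpace Ω] (μ : Measure Ω) [IsProbabilityMeasure μ]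
        (Δ : ℝ), 0 < Δ → ∀ (m L : ℕ), 0 < m → 0 < L →
        ∀ (w : Fin m → ℂ), (∀ j, w j ≠ 0) → (∀ j, (w j).re ≤ 0) →
        ∀ (x : Ω → Fin L → ℝ), Measurable x →
        (∀ i, MemLp (fun ω => x ω i) 2 μ) →
        ∀ (c : Ω → Fin m → ℂ), Measurable c →
        iIndepFun
          (fun (i : Fin m ⊕ Fin m) (ω : Ω) =>
            Sum.elim (fun j => (c ω j).re) (fun j => (c ω j).im) i) μ →
        (∀ i : Fin m ⊕ Fin m,
          Measure.map (fun ω => Sum.elim (fun j => (c ω j).re) (fun j => (c ω j).im) i) μ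
            = gaussianReal 0 (1 / 2 : NNReal)) →
        IndepFun c x μ →
        ∀ (hHerm : (Matrix.of fun i k : Fin L => ∫ ω, x ω i * x ω k ∂μ).IsHermitian)
          (δ : ℝ), 0 < δ → δ < 1 →
        1 - δ ≤ (μ {ω | ∫ ω', (ssmOutput Δ w (c ω) (x ω')) ^ 2 ∂μ
            ≤ C * Δ ^ 2 * (m : ℝ) * (L : ℝ) * (⨆ i, hHerm.eigenvalues i) *
              ((m : ℝ) + Real.log (2 / δ))}).toReal := by
  refine ⟨2, by norm_num, ?_⟩
  intro Ω _ μ _ Δ hΔ m L hm hL w hw hwre x hxmeas hx c hcmeas hindep hgauss hcx hHerm δ hδ0 hδ1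
  classical
  set M : Matrix (Fin L) (Fin L) ℝ := Matrix.of fun i k : Fin L => ∫ ω, x ω i * x ω k ∂μ with hM
  set lam : ℝ := ⨆ i, hHerm.eigenvalues i with hlam
  -- the Gaussian squares
  set X : Fin m ⊕ Fin m → Ω → ℝ :=
    fun i ω => Sum.elim (fun j => (c ω j).re) (fun j => (c ω j).im) i with hX
  have hXmeas : ∀ i, Measurable (X i) := by
    rintro (j | j)
    · exact Complex.measurable_re.comp ((measurable_pi_apply j).comp hcmeas)
    · exact Complex.measurable_im.comp ((measurable_pi_apply j).comp hcmeas)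
  set Y : Fin m ⊕ Fin m → Ω → ℝ := fun i ω => (X i ω) ^ 2 with hY
  have hYmeas : ∀ i, Measurable (Y i) := fun i => (hXmeas i).pow_const 2
  have hYindep : iIndepFun Y μ :=
    hindep.comp (fun _ => fun v : ℝ => v ^ 2) (fun _ => measurable_id.pow_const 2)
  have hgmeas : Measurable (fun v : ℝ => Real.exp ((1/2) * v ^ 2)) :=
    ((measurable_id.pow_const 2).const_mul (1/2)).exp
  have hint_each : ∀ i, Integrable (fun ω => Real.exp ((1/2) * Y i ω)) μ := by
    intro i
    have h0 : Integrable (fun v : ℝ => Real.exp ((1/2) * v ^ 2)) (Measure.map (X i) μ) := by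
      rw [hgauss i]; exact gaussian_sq_integrable
    exact (integrable_map_measure hgmeas.aestronglyMeasurable
      (hXmeas i).aemeasurable).mp h0
  have hmgf_each : ∀ i, mgf (Y i) μ (1/2) = Real.sqrt 2 := by
    intro i
    have h0 : ∫ v, Real.exp ((1/2) * v ^ 2) ∂(Measure.map (X i) μ) = Real.sqrt 2 := by
      rw [hgauss i]; exact gaussian_sq_integral
    rw [integral_map (hXmeas i).aemeasurable hgmeas.aestronglyMeasurable] at h0
    exact h0
  have hS_int : Integrable (fun ω => Real.exp ((1/2) * (∑ i, Y i) ω)) μ :=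
    hYindep.integrable_exp_mul_sum hYmeas (fun i _ => hint_each i)
  have hmgf : mgf (∑ i, Y i) μ (1/2) = 2 ^ m := by
    rw [hYindep.mgf_sum hYmeas Finset.univ]
    simp only [hmgf_each, Finset.prod_const, Finset.card_univ, Fintype.card_sum,
      Fintype.card_fin]
    rw [show m + m = 2 * m by ring, pow_mul, Real.sq_sqrt (by norm_num : (0:ℝ) ≤ 2)]
  set s : ℝ := 2 * ((m : ℝ) + Real.log (2 / δ)) with hs
  have htail : (μ {ω | s ≤ (∑ i, Y i) ω}).toReal ≤ δ := by
    refine le_trans (measure_ge_le_exp_mul_mgf s (by norm_num) hS_int) ?_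
    rw [hmgf]
    have h1 : Real.exp (-(1/2) * s) = Real.exp (-(m:ℝ)) * (δ / 2) := by
      rw [hs, show -(1/2 : ℝ) * (2 * ((m:ℝ) + Real.log (2/δ))) =
        -(m:ℝ) + -Real.log (2/δ) by ring, Real.exp_add]
      congr 1
      rw [Real.exp_neg, Real.exp_log (by positivity)]
      field_simp
    rw [h1]
    have h2 : Real.exp (-(m:ℝ)) * (2:ℝ) ^ m ≤ 1 := by
      rw [Real.exp_neg, ← Real.exp_one_rpow (m:ℝ), Real.rpow_natCast,
        inv_mul_le_iff₀ (by positivity)]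
      rw [mul_one]
      exact pow_le_pow_left₀ (by norm_num) (by linarith [Real.add_one_le_exp (1:ℝ)]) m
    calc Real.exp (-(m:ℝ)) * (δ/2) * 2 ^ m = (Real.exp (-(m:ℝ)) * 2 ^ m) * (δ/2) := by ring
      _ ≤ 1 * (δ/2) := by
          apply mul_le_mul_of_nonneg_right h2 (by positivity)
      _ ≤ δ := by linarith
  -- nonnegativity of lam
  -- quadratic form identity
  have hquad_eq : ∀ a : Fin L → ℝ,
      ∫ ω', (∑ k, a k * x ω' k) ^ 2 ∂μ = a ⬝ᵥ M *ᵥ a := by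
    intro a
    have hint2 : ∀ i k : Fin L, Integrable (fun ω => (a i * x ω i) * (a k * x ω k)) μ :=
      fun i k => l2_mul_integrable ((hx i).const_mul (a i)) ((hx k).const_mul (a k))
    calc ∫ ω', (∑ k, a k * x ω' k) ^ 2 ∂μ
        = ∫ ω', ∑ i, ∑ k, (a i * x ω' i) * (a k * x ω' k) ∂μ := by
          congr 1; funext ω'; rw [sq, Finset.sum_mul_sum]
      _ = ∑ i, ∑ k, ∫ ω', (a i * x ω' i) * (a k * x ω' k) ∂μ := by
          rw [integral_finset_sum _
            (fun i _ => integrable_finset_sum _ (fun k _ => hint2 i k))]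
          exact Finset.sum_congr rfl fun i _ => integral_finset_sum _ (fun k _ => hint2 i k)
      _ = ∑ i, ∑ k, a i * (M i k * a k) := by
          refine Finset.sum_congr rfl fun i _ => Finset.sum_congr rfl fun k _ => ?_
          have hfun : (fun ω => (a i * x ω i) * (a k * x ω k))
              = fun ω => (a i * a k) * (x ω i * x ω k) := by funext ω; ring
          rw [hfun, integral_const_mul]
          have : M i k = ∫ ω, x ω i * x ω k ∂μ := rfl
          rw [this]; ring
      _ = a ⬝ᵥ M *ᵥ a := by
          simp only [dotProduct, Matrix.mulVec, Finset.mul_sum]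
  have hlam0 : 0 ≤ lam := by
    obtain ⟨i0⟩ : Nonempty (Fin L) := ⟨⟨0, hL⟩⟩
    set e : Fin L → ℝ := Pi.single i0 1 with he
    have h1 : e ⬝ᵥ M *ᵥ e ≤ lam * ∑ i, e i ^ 2 := quad_form_le M hHerm e
    have h2 : ∑ i, e i ^ 2 = 1 := by
      rw [he]; simp [Pi.single_apply]
    have h3 : e ⬝ᵥ M *ᵥ e = ∫ ω, x ω i0 * x ω i0 ∂μ := by
      rw [← hquad_eq e]
      have : ∀ ω' : Ω, (∑ k, e k * x ω' k) ^ 2 = x ω' i0 * x ω' i0 := by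
        intro ω'
        rw [he]
        simp [Pi.single_apply, sq]
      simp_rw [this]
    have h4 : 0 ≤ ∫ ω, x ω i0 * x ω i0 ∂μ :=
      integral_nonneg fun ω => mul_self_nonneg _
    rw [h2, mul_one] at h1
    rw [h3] at h1
    linarith
  -- pointwise bound on good event
  have hpoint : ∀ ω, (∑ i, Y i) ω ≤ s →
      ∫ ω', (ssmOutput Δ w (c ω) (x ω')) ^ 2 ∂μ
        ≤ 2 * Δ ^ 2 * (m : ℝ) * (L : ℝ) * lam * ((m : ℝ) + Real.log (2 / δ)) := by
    intro ω hω
    rw [Finset.sum_apply] at hω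
    set a : Fin L → ℝ := fun k =>
      (∑ j, ((Complex.exp ((Δ:ℂ) * w j) - 1) / w j) * c ω j *
        Complex.exp ((Δ:ℂ) * w j * ((L - 1 - (k : ℕ) : ℕ) : ℂ))).re with ha
    have hssm : ∀ ω', ssmOutput Δ w (c ω) (x ω') = ∑ k, a k * x ω' k := fun ω' => rfl
    set T : ℝ := ∑ j, ‖c ω j‖ with hT
    set S : ℝ := ∑ j, ‖c ω j‖ ^ 2 with hS2
    have hTnn : 0 ≤ T := Finset.sum_nonneg fun j _ => norm_nonneg _
    have hSY : S = ∑ i, Y i ω := by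
      rw [hS2, Fintype.sum_sum_type]
      rw [← Finset.sum_add_distrib]
      refine Finset.sum_congr rfl fun j _ => ?_
      rw [Complex.sq_norm, Complex.normSq_apply, hY]
      simp [hX, sq]
    have habs : ∀ k, |a k| ≤ Δ * T := by
      intro k
      calc |a k| ≤ ‖∑ j, ((Complex.exp ((Δ:ℂ) * w j) - 1) / w j) * c ω j *
            Complex.exp ((Δ:ℂ) * w j * ((L - 1 - (k : ℕ) : ℕ) : ℂ))‖ :=
            Complex.abs_re_le_norm _
        _ ≤ ∑ j, ‖((Complex.exp ((Δ:ℂ) * w j) - 1) / w j) * c ω j *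
            Complex.exp ((Δ:ℂ) * w j * ((L - 1 - (k : ℕ) : ℕ) : ℂ))‖ :=
            norm_sum_le _ _
        _ ≤ ∑ j, Δ * ‖c ω j‖ := by
            refine Finset.sum_le_sum fun j _ => ?_
            rw [norm_mul, norm_mul]
            have hu : ‖(Complex.exp ((Δ:ℂ) * w j) - 1) / w j‖ ≤ Δ := by
              rw [norm_div, div_le_iff₀ (norm_pos_iff.mpr (hw j))]
              calc ‖Complex.exp ((Δ:ℂ) * w j) - 1‖
                  ≤ ‖(Δ:ℂ) * w j‖ := by
                    refine abs_exp_sub_one_le ?_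
                    rw [Complex.re_ofReal_mul]
                    exact mul_nonpos_of_nonneg_of_nonpos hΔ.le (hwre j)
                _ = Δ * ‖w j‖ := by
                    rw [norm_mul, Complex.norm_real, Real.norm_eq_abs, abs_of_pos hΔ]
            have he1 : ‖Complex.exp ((Δ:ℂ) * w j *
                ((L - 1 - (k : ℕ) : ℕ) : ℂ))‖ ≤ 1 := by
              rw [Complex.norm_exp, Real.exp_le_one_iff]
              have hre : ((Δ:ℂ) * w j * ((L - 1 - (k : ℕ) : ℕ) : ℂ)).re
                  = Δ * (w j).re * ((L - 1 - (k : ℕ) : ℕ) : ℝ) := by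
                simp [Complex.mul_re, Complex.re_ofReal_mul]
              rw [hre]
              exact mul_nonpos_of_nonpos_of_nonneg
                (mul_nonpos_of_nonneg_of_nonpos hΔ.le (hwre j)) (Nat.cast_nonneg _)
            calc ‖(Complex.exp ((Δ:ℂ) * w j) - 1) / w j‖ * ‖c ω j‖ *
                  ‖Complex.exp ((Δ:ℂ) * w j * ((L - 1 - (k : ℕ) : ℕ) : ℂ))‖
                ≤ (Δ * ‖c ω j‖) * 1 := by
                  refine mul_le_mul (mul_le_mul_of_nonneg_right hu (norm_nonneg _))
                    he1 (norm_nonneg _) ?_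
                  positivity
              _ = Δ * ‖c ω j‖ := mul_one _
        _ = Δ * T := by rw [hT, Finset.mul_sum]
    have hsum_a : ∑ k, a k ^ 2 ≤ (L : ℝ) * (Δ ^ 2 * ((m : ℝ) * S)) := by
      have hTsq : T ^ 2 ≤ (m : ℝ) * S := by
        rw [hT, hS2]
        simpa using sq_sum_le_card_mul_sum_sq
          (s := (Finset.univ : Finset (Fin m))) (f := fun j => ‖c ω j‖)
      have hk : ∀ k : Fin L, a k ^ 2 ≤ Δ ^ 2 * ((m : ℝ) * S) := by
        intro k
        calc a k ^ 2 = |a k| ^ 2 := (sq_abs _).symm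
          _ ≤ (Δ * T) ^ 2 := by
              refine pow_le_pow_left₀ (abs_nonneg _) (habs k) 2
          _ = Δ ^ 2 * T ^ 2 := by ring
          _ ≤ Δ ^ 2 * ((m : ℝ) * S) := by
              exact mul_le_mul_of_nonneg_left hTsq (sq_nonneg _)
      calc ∑ k, a k ^ 2 ≤ ∑ _k : Fin L, Δ ^ 2 * ((m : ℝ) * S) :=
            Finset.sum_le_sum fun k _ => hk k
        _ = (L : ℝ) * (Δ ^ 2 * ((m : ℝ) * S)) := by
            rw [Finset.sum_const, Finset.card_univ, Fintype.card_fin, nsmul_eq_mul]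
    have hSnn : 0 ≤ S := Finset.sum_nonneg fun j _ => sq_nonneg _
    have hS_le : S ≤ s := by rw [hSY]; exact hω
    calc ∫ ω', (ssmOutput Δ w (c ω) (x ω')) ^ 2 ∂μ
        = ∫ ω', (∑ k, a k * x ω' k) ^ 2 ∂μ := by simp_rw [hssm]
      _ = a ⬝ᵥ M *ᵥ a := hquad_eq a
      _ ≤ lam * ∑ k, a k ^ 2 := quad_form_le M hHerm a
      _ ≤ lam * ((L : ℝ) * (Δ ^ 2 * ((m : ℝ) * S))) :=
          mul_le_mul_of_nonneg_left hsum_a hlam0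
      _ ≤ lam * ((L : ℝ) * (Δ ^ 2 * ((m : ℝ) * s))) := by
          have : (0:ℝ) ≤ (L : ℝ) * (Δ ^ 2 * (m : ℝ)) := by positivity
          refine mul_le_mul_of_nonneg_left ?_ hlam0
          refine mul_le_mul_of_nonneg_left ?_ (Nat.cast_nonneg _)
          refine mul_le_mul_of_nonneg_left ?_ (sq_nonneg _)
          exact mul_le_mul_of_nonneg_left hS_le (Nat.cast_nonneg _)
      _ = 2 * Δ ^ 2 * (m : ℝ) * (L : ℝ) * lam * ((m : ℝ) + Real.log (2 / δ)) := by
          rw [hs]; ring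
  -- conclude
  have hSmeas : Measurable (∑ i, Y i) := by
    have heq : (∑ i, Y i) = fun ω => ∑ i, Y i ω := by funext ω; simp
    rw [heq]
    exact Finset.measurable_sum Finset.univ (fun i _ => hYmeas i)
  set A : Set Ω := {ω | s ≤ (∑ i, Y i) ω} with hA
  have hAmeas : MeasurableSet A := measurableSet_le measurable_const hSmeas
  have hsub : Aᶜ ⊆ {ω | ∫ ω', (ssmOutput Δ w (c ω) (x ω')) ^ 2 ∂μ
      ≤ 2 * Δ ^ 2 * (m : ℝ) * (L : ℝ) * lam * ((m : ℝ) + Real.log (2 / δ))} := by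
    intro ω hω
    exact hpoint ω (le_of_lt (not_le.mp hω))
  have h1 : (μ Aᶜ).toReal ≤ (μ {ω | ∫ ω', (ssmOutput Δ w (c ω) (x ω')) ^ 2 ∂μ
      ≤ 2 * Δ ^ 2 * (m : ℝ) * (L : ℝ) * lam * ((m : ℝ) + Real.log (2 / δ))}).toReal :=
    ENNReal.toReal_mono (measure_ne_top μ _) (measure_mono hsub)
  have h2 : (μ Aᶜ).toReal = 1 - (μ A).toReal := by
    rw [measure_compl hAmeas (measure_ne_top μ A), measure_univ,
      ENNReal.toReal_sub_of_le prob_le_one ENNReal.one_ne_top, ENNReal.toReal_one]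
  linarith [h1, h2.symm.le, htail]
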